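/- arXiv:cs/0107026 — 8 statements merged into one kernel-verified Lean document; each statement's English description precedes it below -/
import Mathlib

section
/- If C is a consistent element of T² (i.e. C ≤ₖ -C), then for every B in T², (B ⊗ -C) ⊕ C = (B ⊕ C) ⊗ -C. -/
/-- Conflation on T² defined from a De Morgan complement on T. -/
def conf {T : Type*} (c : T → T) (p : T × T) : T × T := (c p.2, c p.1)

theorem consistent_revision_comm {T : Type*} [CompleteDistribLattice T]
    (c : T → T)
    (hinv : ∀ a, c (c a) = a)
    (hdm1 : ∀ a b : T, c (a ⊔ b) = c a ⊓ c b)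
    (hdm2 : ∀ a b : T, c (a ⊓ b) = c a ⊔ c b)
    (C : T × T) (hC : C ≤ conf c C) :
    ∀ B : T × T, (B ⊓ conf c C) ⊔ C = (B ⊔ C) ⊓ conf c C := by
  intro B
  rw [inf_sup_right, inf_eq_left.mpr hC]
end

section
/- A T²-valuation B is a model of an annotated revision program P (i.e. satisfies every rule of P) if and only if T_P^b(B) ≤ₖ B. -/
namespace ARP

variable (U T : Type*)

/-- Revision atoms: `(true, a)` is `in(a)`, `(false, a)` is `out(a)`. -/
abbrev RevAtom := Bool × U
/-- Annotated revision atoms `(l : α)`. -/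
abbrev AnnAtom := (RevAtom U) × T
/-- An annotated revision rule: a head and a list of body atoms. -/
abbrev Rule := AnnAtom U T × List (AnnAtom U T)
/-- An annotated revision program: a set of rules. -/
abbrev Program := Set (Rule U T)
/-- T-valuations of revision atoms. -/
abbrev TVal := RevAtom U → T
/-- T²-valuations of atoms, with the pointwise (knowledge) ordering. -/
abbrev Val := U → T × T

variable {U T} [CompleteDistribLattice T]

/-- A T-valuation satisfies `(l : α)` iff `v l ≥ α`. -/
def satA (v : TVal U T) (q : AnnAtom U T) : Prop := q.2 ≤ v q.1

/-- The bijection θ⁻¹ from T²-valuations to T-valuations. -/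
def thetaInv (B : Val U T) : TVal U T := fun l => if l.1 then (B l.2).1 else (B l.2).2

/-- The van Emden-Kowalski style operator on T-valuations. -/
def TP (P : Program U T) (v : TVal U T) : TVal U T :=
  fun l => sSup {α | ∃ r ∈ P, r.1 = (l, α) ∧ ∀ q ∈ r.2, satA v q}

/-- The operator `T_P^b = θ ∘ T_P ∘ θ⁻¹` on T²-valuations. -/
def TPb (P : Program U T) (B : Val U T) : Val U T :=
  fun a => (TP P (thetaInv B) (true, a), TP P (thetaInv B) (false, a))

/-- Conflation on T², relative to a De Morgan complement `c` on T. -/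
def conf (c : T → T) (p : T × T) : T × T := (c p.2, c p.1)

/-- Conflation extended pointwise to T²-valuations. -/
def confV (c : T → T) (B : Val U T) : Val U T := fun a => conf c (B a)

/-- `B` is a model of `P`: it satisfies every rule of `P`. -/
def isModel (P : Program U T) (B : Val U T) : Prop :=
  ∀ r ∈ P, (∀ q ∈ r.2, satA (thetaInv B) q) → satA (thetaInv B) r.1

/-- `B` is an s-model of `P`. -/
def isSModel (c : T → T) (P : Program U T) (B : Val U T) : Prop :=
  TPb P B ≤ B ∧ B ≤ TPb P B ⊔ confV c (TPb P B)

/-- The relative pseudocomplement: the least `γ` with `α ⊔ γ ≥ β`. -/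
def pcomp (α β : T) : T := sInf {γ | β ≤ α ⊔ γ}

/-- The reduct `P_{B_R}|B_I`. -/
def reduct (P : Program U T) (BR BI : Val U T) : Program U T :=
  { r' | ∃ r ∈ P, (∀ q ∈ r.2, satA (thetaInv BR) q) ∧
      r' = (r.1, r.2.map (fun q => (q.1, pcomp (thetaInv BI q.1) q.2))) }

/-- The necessary change: the least (pre)fixpoint of `T_P^b`. -/
def NC (P : Program U T) : Val U T := sInf {B | TPb P B ≤ B}

/-- A T²-valuation is consistent if `B ≤ₖ -B`. -/
def consistentVal (c : T → T) (B : Val U T) : Prop := B ≤ confV c B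

/-- `B_R` is a `P`-justified revision of `B_I`. -/
def JRev (c : T → T) (P : Program U T) (BI BR : Val U T) : Prop :=
  BR = (BI ⊓ confV c (NC (reduct P BR BI))) ⊔ NC (reduct P BR BI)

end ARP

theorem model_iff_TPb_le {U T : Type*} [CompleteDistribLattice T]
    (P : ARP.Program U T) (B : ARP.Val U T) :
    ARP.isModel P B ↔ ARP.TPb P B ≤ B := by
  constructor
  · intro h a
    constructor <;>
    · refine sSup_le ?_
      rintro α ⟨r, hr, hh, hb⟩
      have := h r hr hb
      rw [hh] at this
      exact this
  · intro h r hr hb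
    obtain ⟨⟨⟨b, a⟩, α⟩, body⟩ := r
    have hmem : α ∈ {β | ∃ r' ∈ P, r'.1 = ((b, a), β) ∧
        ∀ q ∈ r'.2, ARP.satA (ARP.thetaInv B) q} := ⟨_, hr, rfl, hb⟩
    have hle := le_sSup hmem
    show α ≤ ARP.thetaInv B (b, a)
    cases b
    · exact hle.trans (h a).2
    · exact hle.trans (h a).1
end

section
/- A consistent T²-valuation B is an s-model of an annotated revision program P if and only if B is a model of P. -/
theorem consistent_smodel_iff_model {U T : Type*} [CompleteDistribLattice T]
    (c : T → T)
    (hinv : ∀ a, c (c a) = a)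
    (hdm1 : ∀ a b : T, c (a ⊔ b) = c a ⊓ c b)
    (hdm2 : ∀ a b : T, c (a ⊓ b) = c a ⊔ c b)
    (P : ARP.Program U T) (B : ARP.Val U T)
    (hcons : ARP.consistentVal c B) :
    ARP.isSModel c P B ↔ ARP.isModel P B := by
  have hanti : ∀ a b : T, a ≤ b → c b ≤ c a := by
    intro a b hab
    have h := hdm1 a b
    rw [sup_eq_right.mpr hab] at h
    rw [h]; exact inf_le_left
  have key : ARP.TPb P B ≤ B ↔ ARP.isModel P B := by
    constructor
    · intro h r hr hbody
      obtain ⟨⟨⟨bl, a⟩, α⟩, body⟩ := r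
      have hmem : α ≤ ARP.TP P (ARP.thetaInv B) (bl, a) :=
        le_sSup ⟨(((bl, a), α), body), hr, rfl, hbody⟩
      have ha := h a
      cases bl with
      | true => exact hmem.trans ha.1
      | false => exact hmem.trans ha.2
    · intro h a
      constructor
      · refine sSup_le ?_
        rintro α ⟨r, hr, heq, hbody⟩
        have := h r hr hbody
        rw [heq] at this
        exact this
      · refine sSup_le ?_
        rintro α ⟨r, hr, heq, hbody⟩
        have := h r hr hbody
        rw [heq] at this
        exact this
  constructor
  · intro h; exact key.mp h.1
  · intro h
    have h1 : ARP.TPb P B ≤ B := key.mpr h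
    refine ⟨h1, ?_⟩
    intro a
    refine le_trans (hcons a) (le_sup_of_le_right ?_)
    exact ⟨hanti _ _ (h1 a).2, hanti _ _ (h1 a).1⟩
end

section
/- In a complete infinitely distributive lattice T, the pseudocomplement operation distributes over joins in its second argument: pcomp(α,β₁) ∨ pcomp(α,β₂) = pcomp(α, β₁ ∨ β₂) for all α, β₁, β₂ ∈ T. -/
/-- The relative pseudocomplement: `pcomp α β = ⋀{γ | α ⊔ γ ≥ β}`. -/
def pcomp {T : Type*} [CompleteLattice T] (α β : T) : T := sInf {γ | β ≤ α ⊔ γ}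

lemma le_sup_pcomp {T : Type*} [Order.Coframe T] (α β : T) : β ≤ α ⊔ pcomp α β := by
  rw [pcomp, sup_sInf_eq]
  exact le_iInf₂ fun γ hγ => hγ

lemma pcomp_le {T : Type*} [Order.Coframe T] {α β γ : T} (h : β ≤ α ⊔ γ) :
    pcomp α β ≤ γ := sInf_le h

theorem pcomp_sup_distrib {T : Type*} [Order.Coframe T] (α β₁ β₂ : T) :
    pcomp α β₁ ⊔ pcomp α β₂ = pcomp α (β₁ ⊔ β₂) := by
  apply le_antisymm
  · exact sup_le (pcomp_le (le_sup_left.trans (le_sup_pcomp α (β₁ ⊔ β₂))))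
      (pcomp_le (le_sup_right.trans (le_sup_pcomp α (β₁ ⊔ β₂))))
  · exact pcomp_le (sup_le ((le_sup_pcomp α β₁).trans (sup_le_sup_left le_sup_left α))
      ((le_sup_pcomp α β₂).trans (sup_le_sup_left le_sup_right α)))
end

section
/- For any annotated revision program P and any T²-valuation B, the necessary change of the reduct of P with respect to (B, B) equals T_P^b(B): NC(P_B|B) = T_P^b(B). -/
lemma pcomp_bot {T : Type*} [CompleteDistribLattice T] {α β : T} (h : β ≤ α) :
    ARP.pcomp α β = ⊥ :=
  le_bot_iff.mp (sInf_le (by simpa using h))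

lemma TP_reduct_const {U T : Type*} [CompleteDistribLattice T]
    (P : ARP.Program U T) (B : ARP.Val U T) (v : ARP.TVal U T) :
    ARP.TP (ARP.reduct P B B) v = ARP.TP P (ARP.thetaInv B) := by
  funext l
  unfold ARP.TP
  congr 1
  ext α
  constructor
  · rintro ⟨r', hr', hhead, _⟩
    obtain ⟨r, hrP, hsat, rfl⟩ := hr'
    exact ⟨r, hrP, hhead, hsat⟩
  · rintro ⟨r, hrP, hhead, hsat⟩
    refine ⟨(r.1, r.2.map (fun q => (q.1, ARP.pcomp (ARP.thetaInv B q.1) q.2))),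
      ⟨r, hrP, hsat, rfl⟩, hhead, ?_⟩
    intro q hq
    simp only [List.mem_map] at hq
    obtain ⟨q0, hq0, rfl⟩ := hq
    have : ARP.pcomp (ARP.thetaInv B q0.1) q0.2 = ⊥ := pcomp_bot (hsat q0 hq0)
    simp [ARP.satA, this]

theorem NC_reduct_self {U T : Type*} [CompleteDistribLattice T]
    (P : ARP.Program U T) (B : ARP.Val U T) :
    ARP.NC (ARP.reduct P B B) = ARP.TPb P B := by
  have hconst : ∀ C : ARP.Val U T, ARP.TPb (ARP.reduct P B B) C = ARP.TPb P B := by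
    intro C
    funext a
    simp [ARP.TPb, TP_reduct_const P B]
  unfold ARP.NC
  apply le_antisymm
  · exact sInf_le (by simp [hconst])
  · exact le_sInf (fun C hC => le_trans (by rw [← hconst C]) hC)
end

section
/- Let P be an annotated revision program, and let B_I, B_R, C be T²-valuations with B_R ≤ₖ B_I ⊕ C. Then C satisfies the bodies of all rules in the reduct P_{B_R}|B_I. -/
theorem reduct_bodies_satisfied {U T : Type*} [CompleteDistribLattice T]
    (P : ARP.Program U T) (BI BR C : ARP.Val U T)
    (h : BR ≤ BI ⊔ C) :
    ∀ r ∈ ARP.reduct P BR BI, ∀ q ∈ r.2, ARP.satA (ARP.thetaInv C) q := by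
  rintro r' ⟨r, hrP, hbody, rfl⟩ q hq
  simp only [List.mem_map] at hq
  obtain ⟨p, hp, rfl⟩ := hq
  have hβ : p.2 ≤ ARP.thetaInv BR p.1 := hbody p hp
  have hle : ARP.thetaInv BR p.1 ≤ ARP.thetaInv BI p.1 ⊔ ARP.thetaInv C p.1 := by
    unfold ARP.thetaInv
    rcases p.1 with ⟨b, a⟩
    have := h a
    cases b <;> simp_all [Prod.le_def, Prod.sup_def]
  exact sInf_le (hβ.trans hle)
end

section
/- Let B_I be a consistent model of annotated revision program P. Then B_I is the unique P-justified revision of itself: B_I is a P-justified revision of B_I, and every P-justified revision B_R of B_I equals B_I. -/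
section Aux
open ARP
variable {U T : Type*} [CompleteDistribLattice T]

lemma pcomp_le_sup (α β : T) : β ≤ α ⊔ ARP.pcomp α β := by
  rw [ARP.pcomp, sup_sInf_eq]
  exact le_iInf₂ fun γ hγ => hγ

lemma TP_reduct_le {P : ARP.Program U T} {BR BI : ARP.Val U T}
    (hmod : ARP.isModel P BI) (l : ARP.RevAtom U) :
    ARP.TP (ARP.reduct P BR BI) (ARP.thetaInv BI) l ≤ ARP.thetaInv BI l := by
  apply sSup_le
  rintro α ⟨r', hr', hhead, hbody⟩
  obtain ⟨r, hrP, hbR, rfl⟩ := hr'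
  have hsat : ∀ q ∈ r.2, ARP.satA (ARP.thetaInv BI) q := by
    intro q hq
    have h1 := hbody (q.1, ARP.pcomp (ARP.thetaInv BI q.1) q.2)
      (List.mem_map_of_mem hq)
    have h2 := pcomp_le_sup (ARP.thetaInv BI q.1) q.2
    exact h2.trans (sup_le le_rfl h1)
  have hh := hmod r hrP hsat
  simp only [ARP.satA] at hh ⊢
  rw [hhead] at hh
  exact hh

lemma NC_reduct_le {P : ARP.Program U T} {BR BI : ARP.Val U T}
    (hmod : ARP.isModel P BI) : ARP.NC (ARP.reduct P BR BI) ≤ BI := by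
  apply sInf_le
  intro a
  exact ⟨TP_reduct_le hmod (true, a), TP_reduct_le hmod (false, a)⟩

end Aux

theorem consistent_model_unique_revision {U T : Type*} [CompleteDistribLattice T]
    (c : T → T)
    (hinv : ∀ a, c (c a) = a)
    (hdm1 : ∀ a b : T, c (a ⊔ b) = c a ⊓ c b)
    (hdm2 : ∀ a b : T, c (a ⊓ b) = c a ⊔ c b)
    (P : ARP.Program U T) (BI : ARP.Val U T)
    (hcons : ARP.consistentVal c BI) (hmod : ARP.isModel P BI) :
    ARP.JRev c P BI BI ∧ ∀ BR : ARP.Val U T, ARP.JRev c P BI BR → BR = BI := by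
  have hc : ∀ {x y : T}, x ≤ y → c y ≤ c x := by
    intro x y h
    calc c y = c (x ⊔ y) := by rw [sup_eq_right.mpr h]
      _ = c x ⊓ c y := hdm1 x y
      _ ≤ c x := inf_le_left
  have hca : ∀ B B' : ARP.Val U T, B ≤ B' → ARP.confV c B' ≤ ARP.confV c B := by
    intro B B' h a
    exact ⟨hc (h a).2, hc (h a).1⟩
  have self : ∀ BR : ARP.Val U T,
      ((BI ⊓ ARP.confV c (ARP.NC (ARP.reduct P BR BI))) ⊔
        ARP.NC (ARP.reduct P BR BI)) = BI := by
    intro BR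
    have hCle : ARP.NC (ARP.reduct P BR BI) ≤ BI := NC_reduct_le hmod
    have hIc : BI ≤ ARP.confV c (ARP.NC (ARP.reduct P BR BI)) :=
      le_trans hcons (hca _ _ hCle)
    rw [inf_eq_left.mpr hIc, sup_eq_left.mpr hCle]
  exact ⟨(self BI).symm, fun BR h => h.trans (self BR)⟩
end

section
/- Let R, B be T²-valuations and suppose the set S = {C | R = (B ⊗ -C) ⊕ C} is nonempty. Then ⊓S ∈ S; that is, the pointwise meet of all C transforming B into R itself transforms B into R, so diff(R,B) is the least such C. -/
theorem key {T : Type*} [CompleteDistribLattice T] (c : T → T)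
    (hinv : ∀ a, c (c a) = a) (hanti : ∀ a b : T, a ≤ b → c b ≤ c a)
    {ι : Type*} [Nonempty ι] (r b : T) (x y : ι → T)
    (h : ∀ i, r = (b ⊓ c (y i)) ⊔ x i) :
    r = (b ⊓ c (⨅ i, y i)) ⊔ ⨅ i, x i := by
  have hc : c (⨅ i, y i) = ⨆ i, c (y i) := by
    apply le_antisymm
    · have : ∀ u, (∀ i, c (y i) ≤ u) → c (⨅ i, y i) ≤ u := by
        intro u hu
        have : c u ≤ ⨅ i, y i := le_iInf fun i => by
          have := hanti _ _ (hu i); rwa [hinv] at this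
        have := hanti _ _ this; rwa [hinv] at this
      exact this _ (le_iSup _)
    · exact iSup_le fun i => hanti _ _ (iInf_le _ i)
  rw [hc]
  apply le_antisymm
  · calc r = ⨅ i, ((b ⊓ c (y i)) ⊔ x i) := le_antisymm (le_iInf fun i => (h i).le) ((iInf_le _ (Classical.arbitrary ι)).trans (h _).ge)
      _ ≤ ⨅ i, ((b ⊓ ⨆ j, c (y j)) ⊔ x i) :=
        iInf_mono fun i => sup_le_sup_right (inf_le_inf_left _ (le_iSup (fun j => c (y j)) i)) _
      _ = (b ⊓ ⨆ j, c (y j)) ⊔ ⨅ i, x i := (sup_iInf_eq _ _).symm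
  · apply sup_le
    · rw [inf_iSup_eq]
      exact iSup_le fun i => (h i).ge.trans' le_sup_left
    · exact (iInf_le _ (Classical.arbitrary ι)).trans ((h _).ge.trans' le_sup_right)

/-- Conflation on T² from a De Morgan complement `c`, extended pointwise. -/
def confV {U T : Type*} (c : T → T) (B : U → T × T) : U → T × T :=
  fun a => (c (B a).2, c (B a).1)

theorem diff_least {U T : Type*} [CompleteDistribLattice T]
    (c : T → T)
    (hinv : ∀ a, c (c a) = a)
    (hanti : ∀ a b : T, a ≤ b → c b ≤ c a)
    (R B : U → T × T)
    (S : Set (U → T × T)) (hS : S = {C | R = (B ⊓ confV c C) ⊔ C})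
    (hne : S.Nonempty) :
    sInf S ∈ S := by
  subst hS
  have : Nonempty ↥{C : U → T × T | R = (B ⊓ confV c C) ⊔ C} := hne.to_subtype
  show R = (B ⊓ confV c (sInf _)) ⊔ sInf _
  funext a
  have h1 : ∀ C : ↥{C : U → T × T | R = (B ⊓ confV c C) ⊔ C},
      (R a).1 = ((B a).1 ⊓ c ((C.1 a).2)) ⊔ (C.1 a).1 ∧
      (R a).2 = ((B a).2 ⊓ c ((C.1 a).1)) ⊔ (C.1 a).2 := by
    rintro ⟨C, hC⟩
    constructor <;> (conv_lhs => rw [show R = (B ⊓ confV c C) ⊔ C from hC]) <;> rfl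
  have hfst : (sInf {C : U → T × T | R = (B ⊓ confV c C) ⊔ C} a).1
      = ⨅ C : ↥{C : U → T × T | R = (B ⊓ confV c C) ⊔ C}, (C.1 a).1 := by
    rw [sInf_apply, Prod.fst_iInf]
  have hsnd : (sInf {C : U → T × T | R = (B ⊓ confV c C) ⊔ C} a).2
      = ⨅ C : ↥{C : U → T × T | R = (B ⊓ confV c C) ⊔ C}, (C.1 a).2 := by
    rw [sInf_apply, Prod.snd_iInf]
  have e1 := key c hinv hanti (R a).1 (B a).1 _ _ (fun C => (h1 C).1)
  have e2 := key c hinv hanti (R a).2 (B a).2 _ _ (fun C => (h1 C).2)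
  show R a = ((B a) ⊓ (c _, c _)) ⊔ _
  ext
  · show (R a).1 = ((B a).1 ⊓ c _) ⊔ _
    rw [hfst, hsnd]; exact e1
  · show (R a).2 = ((B a).2 ⊓ c _) ⊔ _
    rw [hfst, hsnd]; exact e2
end
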